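/- For the equation Δ²u(n-1) = λu(n) with base point n₀ = 0 and u₀ ≡ 1, the general solution is spanned by u₁(n) = Σ_{k=0}^{n-1} λ^k (n+k-1)^{(2k)}/(2k)! and u₂(n) = Σ_{k=0}^{n-1} λ^k (n+k)^{(2k+1)}/(2k+1)! for n > 0; in particular each of u₁ and u₂ satisfies u(n+1) - 2u(n) + u(n-1) = λu(n) for all n ≥ 1. -/

import Mathlib

/-- The falling factorial `m⁽ʲ⁾ = m(m-1)⋯(m-j+1)`. -/
def ffall (m : ℤ) (j : ℕ) : ℤ := ∏ i ∈ Finset.range j, (m - i)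

lemma ffall_eq_zero {m : ℤ} {j : ℕ} (h0 : 0 ≤ m) (h : m < j) : ffall m j = 0 := by
  apply Finset.prod_eq_zero (i := m.toNat) (Finset.mem_range.mpr (by omega))
  rw [Int.toNat_of_nonneg h0, sub_self]

lemma ffall_succ (m : ℤ) (j : ℕ) :
    ffall (m + 1) (j + 1) - ffall m (j + 1) = ((j : ℤ) + 1) * ffall m j := by
  have h1 : ffall (m + 1) (j + 1) = (m + 1) * ffall m j := by
    unfold ffall
    rw [Finset.prod_range_succ']
    push_cast
    rw [Finset.prod_congr rfl (fun i _ => by ring :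
      ∀ i ∈ Finset.range j, m + 1 - ((i : ℤ) + 1) = m - i)]
    ring
  have h2 : ffall m (j + 1) = ffall m j * (m - j) := Finset.prod_range_succ _ _
  rw [h1, h2]; ring

lemma ffall_sq (m : ℤ) (j : ℕ) :
    ffall (m + 1) (j + 2) - 2 * ffall m (j + 2) + ffall (m - 1) (j + 2)
      = ((j : ℤ) + 2) * ((j : ℤ) + 1) * ffall (m - 1) j := by
  have h1 := ffall_succ m (j + 1)
  have h2 : ffall m (j + 1 + 1) - ffall (m - 1) (j + 1 + 1)
      = ((j : ℤ) + 1 + 1) * ffall (m - 1) (j + 1) := by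
    have := ffall_succ (m - 1) (j + 1)
    rwa [sub_add_cancel] at this
  have h3 : ffall m (j + 1) - ffall (m - 1) (j + 1) = ((j : ℤ) + 1) * ffall (m - 1) j := by
    have := ffall_succ (m - 1) j
    rwa [sub_add_cancel] at this
  push_cast at h1 h2 h3 ⊢
  linear_combination h1 - h2 + ((j : ℤ) + 2) * h3

noncomputable def Af (lam : ℂ) (n : ℤ) (k : ℕ) : ℂ :=
  lam ^ k * (ffall (n + k - 1) (2 * k) : ℂ) / (Nat.factorial (2 * k) : ℂ)

noncomputable def Bf (lam : ℂ) (n : ℤ) (k : ℕ) : ℂ :=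
  lam ^ k * (ffall (n + k) (2 * k + 1) : ℂ) / (Nat.factorial (2 * k + 1) : ℂ)

lemma Af_step (lam : ℂ) (n : ℤ) (s : ℕ) :
    Af lam (n + 1) (s + 1) - 2 * Af lam n (s + 1) + Af lam (n - 1) (s + 1)
      = lam * Af lam n s := by
  have h := ffall_sq (n + s) (2 * s)
  have h' := congrArg (fun z : ℤ => (z : ℂ)) h
  push_cast at h'
  have hfac : (Nat.factorial (2 * (s + 1)) : ℂ)
      = ((2 * (s : ℂ) + 2) * (2 * (s : ℂ) + 1)) * (Nat.factorial (2 * s) : ℂ) := by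
    have e : 2 * (s + 1) = (2 * s + 1) + 1 := by ring
    rw [e, Nat.factorial_succ, Nat.factorial_succ]; push_cast; ring
  have hD : (Nat.factorial (2 * s) : ℂ) ≠ 0 := Nat.cast_ne_zero.mpr (Nat.factorial_ne_zero _)
  have h1 : (2 * (s : ℂ) + 2) ≠ 0 := by
    have : ((2 * s + 2 : ℕ) : ℂ) ≠ 0 := Nat.cast_ne_zero.mpr (by omega)
    push_cast at this
    convert this using 2
  have h2 : (2 * (s : ℂ) + 1) ≠ 0 := by
    have : ((2 * s + 1 : ℕ) : ℂ) ≠ 0 := Nat.cast_ne_zero.mpr (by omega)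
    push_cast at this
    convert this using 2
  unfold Af
  rw [hfac]
  push_cast
  rw [show n + 1 + ((s : ℤ) + 1) - 1 = n + s + 1 by ring,
      show n + ((s : ℤ) + 1) - 1 = n + s by ring,
      show n - 1 + ((s : ℤ) + 1) - 1 = n + s - 1 by ring,
      show 2 * (s + 1) = 2 * s + 2 by ring]
  field_simp
  linear_combination (lam ^ s * lam) * h'

lemma Bf_step (lam : ℂ) (n : ℤ) (s : ℕ) :
    Bf lam (n + 1) (s + 1) - 2 * Bf lam n (s + 1) + Bf lam (n - 1) (s + 1)
      = lam * Bf lam n s := by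
  have h := ffall_sq (n + s + 1) (2 * s + 1)
  have h' := congrArg (fun z : ℤ => (z : ℂ)) h
  push_cast at h'
  rw [show n + (s : ℤ) + 1 - 1 = n + s by ring] at h'
  have hfac : (Nat.factorial (2 * (s + 1) + 1) : ℂ)
      = ((2 * (s : ℂ) + 3) * (2 * (s : ℂ) + 2)) * (Nat.factorial (2 * s + 1) : ℂ) := by
    have e : 2 * (s + 1) + 1 = (2 * s + 2) + 1 := by ring
    rw [e, Nat.factorial_succ, Nat.factorial_succ]; push_cast; ring
  have hD : (Nat.factorial (2 * s + 1) : ℂ) ≠ 0 := Nat.cast_ne_zero.mpr (Nat.factorial_ne_zero _)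
  have h1 : (2 * (s : ℂ) + 3) ≠ 0 := by
    have : ((2 * s + 3 : ℕ) : ℂ) ≠ 0 := Nat.cast_ne_zero.mpr (by omega)
    push_cast at this
    convert this using 2
  have h2 : (2 * (s : ℂ) + 2) ≠ 0 := by
    have : ((2 * s + 2 : ℕ) : ℂ) ≠ 0 := Nat.cast_ne_zero.mpr (by omega)
    push_cast at this
    convert this using 2
  unfold Bf
  rw [hfac]
  push_cast
  rw [show n + 1 + ((s : ℤ) + 1) = n + s + 1 + 1 by ring,
      show n + ((s : ℤ) + 1) = n + s + 1 by ring,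
      show n - 1 + ((s : ℤ) + 1) = n + s + 1 - 1 by ring,
      show 2 * (s + 1) + 1 = (2 * s + 1) + 2 by ring]
  field_simp
  rw [show n + (s : ℤ) + 1 - 1 = n + s by ring]
  linear_combination (lam ^ s * lam) * h'

lemma Af_one (lam : ℂ) (m : ℤ) : Af lam m 0 = 1 := by
  simp [Af, ffall]

theorem discrete_laplacian_solutions (lam : ℂ) (u₁ u₂ : ℤ → ℂ)
    (hu₁ : ∀ n : ℤ, u₁ n =
      ∑ k ∈ Finset.range (if 0 < n then n.toNat else (-n).toNat + 1),
        lam ^ k * (ffall (n + k - 1) (2 * k) : ℂ) / (Nat.factorial (2 * k) : ℂ))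
    (hu₂ : ∀ n : ℤ, u₂ n = if n = 0 then 0 else
      ∑ k ∈ Finset.range n.natAbs,
        lam ^ k * (ffall (n + k) (2 * k + 1) : ℂ) / (Nat.factorial (2 * k + 1) : ℂ)) :
    (∀ n : ℤ, 1 ≤ n → u₁ (n + 1) - 2 * u₁ n + u₁ (n - 1) = lam * u₁ n) ∧
    (∀ n : ℤ, 1 ≤ n → u₂ (n + 1) - 2 * u₂ n + u₂ (n - 1) = lam * u₂ n) ∧
    (∀ c d : ℂ, (∀ n : ℤ, c * u₁ n + d * u₂ n = 0) → c = 0 ∧ d = 0) := by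
  have hA : ∀ n : ℤ, 0 ≤ n → ∀ N : ℕ, n.toNat + 1 ≤ N →
      u₁ n = ∑ k ∈ Finset.range N, Af lam n k := by
    intro n hn N hN
    rw [hu₁ n]
    rcases eq_or_lt_of_le hn with h0 | h0
    · rw [if_neg (by omega)]
      apply Finset.sum_subset (Finset.range_subset_range.mpr (by omega))
      intro k _ hk
      rw [Finset.mem_range] at hk
      have : ffall (n + k - 1) (2 * k) = 0 := ffall_eq_zero (by omega) (by omega)
      simp [Af, this]
    · rw [if_pos h0]
      apply Finset.sum_subset (Finset.range_subset_range.mpr (by omega))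
      intro k _ hk
      rw [Finset.mem_range] at hk
      have : ffall (n + k - 1) (2 * k) = 0 := ffall_eq_zero (by omega) (by omega)
      simp [Af, this]
  have hB : ∀ n : ℤ, 0 ≤ n → ∀ N : ℕ, n.toNat + 1 ≤ N →
      u₂ n = ∑ k ∈ Finset.range N, Bf lam n k := by
    intro n hn N hN
    rw [hu₂ n]
    rcases eq_or_lt_of_le hn with h0 | h0
    · rw [if_pos (by omega), eq_comm]
      apply Finset.sum_eq_zero
      intro k _
      have : ffall (n + k) (2 * k + 1) = 0 := ffall_eq_zero (by omega) (by omega)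
      simp [Bf, this]
    · rw [if_neg (by omega)]
      have hna : n.natAbs = n.toNat := by omega
      rw [hna]
      apply Finset.sum_subset (Finset.range_subset_range.mpr (by omega))
      intro k _ hk
      rw [Finset.mem_range] at hk
      have : ffall (n + k) (2 * k + 1) = 0 := ffall_eq_zero (by omega) (by omega)
      simp [Bf, this]
  refine ⟨?_, ?_, ?_⟩
  · intro n hn
    set N := n.toNat + 1 with hNdef
    have e1 := hA (n + 1) (by omega) (N + 1) (by omega)
    have e2 := hA n (by omega) (N + 1) (by omega)
    have e3 := hA (n - 1) (by omega) (N + 1) (by omega)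
    have e4 := hA n (by omega) N (by omega)
    have main : ∑ k ∈ Finset.range (N + 1),
        (Af lam (n + 1) k - 2 * Af lam n k + Af lam (n - 1) k)
        = lam * ∑ k ∈ Finset.range N, Af lam n k := by
      rw [Finset.sum_range_succ'
        (fun k => Af lam (n + 1) k - 2 * Af lam n k + Af lam (n - 1) k) N]
      simp only [Af_step, Af_one]
      rw [← Finset.mul_sum]
      ring
    calc u₁ (n + 1) - 2 * u₁ n + u₁ (n - 1)
        = ∑ k ∈ Finset.range (N + 1),
            (Af lam (n + 1) k - 2 * Af lam n k + Af lam (n - 1) k) := by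
          rw [e1, e2, e3]
          rw [Finset.sum_add_distrib, Finset.sum_sub_distrib, ← Finset.mul_sum]
      _ = lam * ∑ k ∈ Finset.range N, Af lam n k := main
      _ = lam * u₁ n := by rw [e4]
  · intro n hn
    set N := n.toNat + 1 with hNdef
    have e1 := hB (n + 1) (by omega) (N + 1) (by omega)
    have e2 := hB n (by omega) (N + 1) (by omega)
    have e3 := hB (n - 1) (by omega) (N + 1) (by omega)
    have e4 := hB n (by omega) N (by omega)
    have hB0 : Bf lam (n + 1) 0 - 2 * Bf lam n 0 + Bf lam (n - 1) 0 = 0 := by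
      simp [Bf, ffall]
      ring
    have main : ∑ k ∈ Finset.range (N + 1),
        (Bf lam (n + 1) k - 2 * Bf lam n k + Bf lam (n - 1) k)
        = lam * ∑ k ∈ Finset.range N, Bf lam n k := by
      rw [Finset.sum_range_succ'
        (fun k => Bf lam (n + 1) k - 2 * Bf lam n k + Bf lam (n - 1) k) N]
      simp only [Bf_step, hB0]
      rw [← Finset.mul_sum]
      ring
    calc u₂ (n + 1) - 2 * u₂ n + u₂ (n - 1)
        = ∑ k ∈ Finset.range (N + 1),
            (Bf lam (n + 1) k - 2 * Bf lam n k + Bf lam (n - 1) k) := by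
          rw [e1, e2, e3]
          rw [Finset.sum_add_distrib, Finset.sum_sub_distrib, ← Finset.mul_sum]
      _ = lam * ∑ k ∈ Finset.range N, Bf lam n k := main
      _ = lam * u₂ n := by rw [e4]
  · intro c d h
    have e10 : u₁ 0 = 1 := by
      rw [hu₁ 0]
      norm_num [ffall]
    have e20 : u₂ 0 = 0 := by rw [hu₂ 0]; simp
    have e21 : u₂ 1 = 1 := by
      rw [hu₂ 1]
      norm_num [ffall]
    have h0 := h 0
    rw [e10, e20] at h0
    have hc : c = 0 := by linear_combination h0
    have h1 := h 1
    rw [e21, hc] at h1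
    exact ⟨hc, by linear_combination h1⟩
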